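/- The soft second-price payment satisfies user individual rationality: for all bid vectors b ∈ [0,1]^n and all m > 0, 0 ≤ p_i(b_i, b_{-i}) ≤ b_i, where p_i(b_i,b_{-i}) = b_i - (Σ_j e^{m b_j})/(m e^{m b_i}) · ln( (Σ_j e^{m b_j}) / (1 + Σ_{j≠i} e^{m b_j}) ). -/

import Mathlib

open Finset

/-- Soft second-price payment rule with parameter `m`. -/
noncomputable def softPay (n : ℕ) (m : ℝ) (b : Fin n → ℝ) (i : Fin n) : ℝ :=
  b i - (∑ j, Real.exp (m * b j)) / (m * Real.exp (m * b i)) *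
    Real.log ((∑ j, Real.exp (m * b j)) /
      (1 + ∑ j ∈ Finset.univ.erase i, Real.exp (m * b j)))

lemma key_ineq (x T : ℝ) (hx : 1 ≤ x) (hT : 0 ≤ T) :
    (x + T) * Real.log ((x + T) / (1 + T)) ≤ x * Real.log x := by
  have hx0 : (0:ℝ) < x := lt_of_lt_of_le one_pos hx
  have hxT : (0:ℝ) < x + T := by linarith
  have h1T : (0:ℝ) < 1 + T := by linarith
  set lam := x / (x + T) with hlam
  have hlam0 : 0 ≤ lam := le_of_lt (div_pos hx0 hxT)
  have hlam1 : lam ≤ 1 := by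
    rw [hlam, div_le_one hxT]; linarith
  have hconv := convexOn_exp.2 (Set.mem_univ (-Real.log x)) (Set.mem_univ (0:ℝ))
      hlam0 (by linarith : (0:ℝ) ≤ 1 - lam) (by ring)
  simp only [smul_eq_mul, mul_zero, add_zero, Real.exp_zero, mul_one] at hconv
  rw [Real.exp_neg, Real.exp_log hx0] at hconv
  -- hconv : exp (lam * -log x) ≤ lam * x⁻¹ + (1 - lam)
  have hval : lam * x⁻¹ + (1 - lam) = (1 + T) / (x + T) := by
    rw [hlam]; field_simp; ring
  rw [hval] at hconv
  have hexp : (x + T) / (1 + T) ≤ Real.exp (lam * Real.log x) := by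
    have h1 : Real.exp (lam * -Real.log x) = (Real.exp (lam * Real.log x))⁻¹ := by
      rw [← Real.exp_neg]; ring_nf
    rw [h1] at hconv
    have hep : (0:ℝ) < Real.exp (lam * Real.log x) := Real.exp_pos _
    rw [inv_eq_one_div, div_le_div_iff₀ hep hxT] at hconv
    rw [div_le_iff₀ h1T]
    nlinarith
  have hlog : Real.log ((x + T) / (1 + T)) ≤ lam * Real.log x := by
    have := Real.log_le_log (div_pos hxT h1T) hexp
    rwa [Real.log_exp] at this
  have h2 : (x + T) * Real.log ((x + T) / (1 + T)) ≤ (x + T) * (lam * Real.log x) :=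
    mul_le_mul_of_nonneg_left hlog hxT.le
  have h3 : (x + T) * (lam * Real.log x) = x * Real.log x := by
    rw [hlam]; field_simp
  linarith [h2, h3.le, h3.ge]

theorem stmt6 (n : ℕ) (hn : 2 ≤ n) (m : ℝ) (hm : 0 < m)
    (b : Fin n → ℝ) (hb : ∀ j, b j ∈ Set.Icc (0:ℝ) 1) (i : Fin n) :
    0 ≤ softPay n m b i ∧ softPay n m b i ≤ b i := by
  set x := Real.exp (m * b i) with hxdef
  set T := ∑ j ∈ Finset.univ.erase i, Real.exp (m * b j) with hTdef
  have hS : (∑ j, Real.exp (m * b j)) = x + T := by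
    rw [hxdef, hTdef, ← Finset.add_sum_erase _ _ (Finset.mem_univ i)]
  have hx1 : 1 ≤ x := Real.one_le_exp (mul_nonneg hm.le (hb i).1)
  have hx0 : (0:ℝ) < x := lt_of_lt_of_le one_pos hx1
  have hT0 : 0 ≤ T := Finset.sum_nonneg fun j _ => (Real.exp_pos _).le
  have h1T : (0:ℝ) < 1 + T := by linarith
  have hxT : (0:ℝ) < x + T := by linarith
  unfold softPay
  rw [hS]
  constructor
  · -- lower bound: payment nonneg
    have hq : (x + T) / (m * x) * Real.log ((x + T) / (1 + T)) ≤ b i := by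
      rw [div_mul_eq_mul_div, div_le_iff₀ (by positivity)]
      calc (x + T) * Real.log ((x + T) / (1 + T)) ≤ x * Real.log x :=
            key_ineq x T hx1 hT0
        _ = b i * (m * x) := by rw [hxdef, Real.log_exp]; ring
    linarith
  · -- upper bound: subtracted term nonneg
    have hlg : 0 ≤ Real.log ((x + T) / (1 + T)) := by
      apply Real.log_nonneg
      rw [le_div_iff₀ h1T]; linarith
    have hfrac : 0 ≤ (x + T) / (m * x) := by positivity
    nlinarith [mul_nonneg hfrac hlg]
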